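/- For every T > 0: δ(T) = 2·E_{ν_T}[ ε̄/(k_B T) ], and the function T ↦ T·δ(T) is differentiable at T with derivative D(T) = 2·Var_{ν_T}[ ε̄/(k_B T) ] = (2/(k_B T)²) · ( ∫_𝓔 ε̄² dν_T − ( ∫_𝓔 ε̄ dν_T )² ), where E_{ν_T} and Var_{ν_T} denote expectation and variance with respect to the probability measure ν_T. -/

import Mathlib

open MeasureTheory Real
open scoped ENNReal NNReal

noncomputable section

variable {𝓔 : Type*} [MeasurableSpace 𝓔]

/-- The (thermodynamic) number of internal degrees of freedom
`δ(T) = (2/(k_B T)) ⬝ (∫ ε̄ e^{-ε̄/(k_B T)} dμ) / (∫ e^{-ε̄/(k_B T)} dμ)`, `ε̄ = ε - ε0`. -/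
def deltaFun (μ : Measure 𝓔) (ε : 𝓔 → ℝ) (ε0 : ℝ) (kB T : ℝ) : ℝ :=
  (2 / (kB * T)) *
    ((∫ ζ, (ε ζ - ε0) * Real.exp (-(ε ζ - ε0) / (kB * T)) ∂μ) /
      (∫ ζ, Real.exp (-(ε ζ - ε0) / (kB * T)) ∂μ))

/-- The Gibbs probability measure `ν_T`, with density `Z(1/(k_B T))⁻¹ e^{-ε̄/(k_B T)}`
with respect to `μ`. -/
def gibbs (μ : Measure 𝓔) (ε : 𝓔 → ℝ) (ε0 : ℝ) (kB T : ℝ) : Measure 𝓔 :=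
  μ.withDensity fun ζ => ENNReal.ofReal
    ((∫ ζ', Real.exp (-(ε ζ' - ε0) / (kB * T)) ∂μ)⁻¹ * Real.exp (-(ε ζ - ε0) / (kB * T)))

lemma aux_le_inv_mul_exp (a x : ℝ) (ha : 0 < a) : x ≤ a⁻¹ * Real.exp (a * x) := by
  rw [inv_mul_eq_div, le_div_iff₀ ha, mul_comm]
  linarith [Real.add_one_le_exp (a * x)]

lemma aux_mul_exp_le (b x : ℝ) (hb : 0 < b) :
    x * Real.exp (-b * x) ≤ (b / 2)⁻¹ * Real.exp (-(b / 2) * x) := by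
  calc x * Real.exp (-b * x)
      ≤ ((b / 2)⁻¹ * Real.exp ((b / 2) * x)) * Real.exp (-b * x) :=
        mul_le_mul_of_nonneg_right (aux_le_inv_mul_exp (b / 2) x (by positivity))
          (Real.exp_pos _).le
    _ = (b / 2)⁻¹ * Real.exp (-(b / 2) * x) := by
        rw [mul_assoc, ← Real.exp_add]; congr 2; ring

lemma aux_sq_mul_exp_le (b x : ℝ) (hb : 0 < b) (hx : 0 ≤ x) :
    x ^ 2 * Real.exp (-b * x) ≤ ((b / 4)⁻¹) ^ 2 * Real.exp (-(b / 2) * x) := by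
  have h := aux_le_inv_mul_exp (b / 4) x (by positivity)
  have h2 : x ^ 2 ≤ ((b / 4)⁻¹ * Real.exp ((b / 4) * x)) ^ 2 := pow_le_pow_left₀ hx h 2
  calc x ^ 2 * Real.exp (-b * x)
      ≤ ((b / 4)⁻¹ * Real.exp ((b / 4) * x)) ^ 2 * Real.exp (-b * x) :=
        mul_le_mul_of_nonneg_right h2 (Real.exp_pos _).le
    _ = ((b / 4)⁻¹) ^ 2 * Real.exp (-(b / 2) * x) := by
        rw [mul_pow, ← Real.exp_nat_mul, mul_assoc, ← Real.exp_add]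
        congr 2; push_cast; ring

/-- **Proposition (probabilistic interpretation of δ and D).**
`δ(T) = 2 E_{ν_T}[ε̄/(k_B T)]`, and `T ↦ T δ(T)` is differentiable with derivative
`D(T) = 2 Var_{ν_T}[ε̄/(k_B T)] = (2/(k_B T)²)(∫ ε̄² dν_T − (∫ ε̄ dν_T)²)`. -/
theorem delta_eq_expectation_and_D_eq_variance
    (μ : Measure 𝓔) (hμ : μ Set.univ ≠ 0)
    (kB : ℝ) (hkB : 0 < kB)
    (ε : 𝓔 → ℝ) (hε : Measurable ε) (ε0 : ℝ)
    (hlow : ∀ᵐ ζ ∂μ, ε0 ≤ ε ζ)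
    (hsup : ∀ R : ℝ, (∀ᵐ ζ ∂μ, R ≤ ε ζ) → R ≤ ε0)
    (hZ : ∀ β : ℝ, 0 < β → Integrable (fun ζ => Real.exp (-β * (ε ζ - ε0))) μ)
    (T : ℝ) (hT : 0 < T) :
    deltaFun μ ε ε0 kB T = 2 * ∫ ζ, (ε ζ - ε0) / (kB * T) ∂(gibbs μ ε ε0 kB T) ∧
    HasDerivAt (fun s => s * deltaFun μ ε ε0 kB s)
      (2 * ProbabilityTheory.variance (fun ζ => (ε ζ - ε0) / (kB * T)) (gibbs μ ε ε0 kB T))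
      T ∧
    2 * ProbabilityTheory.variance (fun ζ => (ε ζ - ε0) / (kB * T)) (gibbs μ ε ε0 kB T)
      = (2 / (kB * T) ^ 2) *
        ((∫ ζ, (ε ζ - ε0) ^ 2 ∂(gibbs μ ε ε0 kB T)) -
          (∫ ζ, (ε ζ - ε0) ∂(gibbs μ ε ε0 kB T)) ^ 2) := by

  haveI : NeZero μ := ⟨by simpa [Measure.measure_univ_eq_zero] using hμ⟩
  have hc : 0 < kB * T := mul_pos hkB hT
  set β₀ : ℝ := (kB * T)⁻¹ with hβ₀def
  have hβ₀ : 0 < β₀ := inv_pos.2 hc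
  set f : 𝓔 → ℝ := fun ζ => ε ζ - ε0 with hfdef
  have hfm : Measurable f := hε.sub measurable_const
  have hf0 : ∀ᵐ ζ ∂μ, 0 ≤ f ζ := hlow.mono fun ζ h => sub_nonneg.2 h
  have hem : ∀ b : ℝ, Measurable fun ζ => Real.exp (-b * f ζ) :=
    fun b => Real.measurable_exp.comp (hfm.const_mul (-b))
  -- integrability of the first and second moments
  have hM1i : ∀ b : ℝ, 0 < b → Integrable (fun ζ => f ζ * Real.exp (-b * f ζ)) μ := by
    intro b hb
    refine Integrable.mono' ((hZ (b / 2) (by positivity)).const_mul (b / 2)⁻¹)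
      ((hfm.mul (hem b)).aestronglyMeasurable) ?_
    filter_upwards [hf0] with ζ hζ
    rw [Real.norm_eq_abs, abs_of_nonneg (mul_nonneg hζ (Real.exp_pos _).le)]
    exact aux_mul_exp_le b (f ζ) hb
  have hM2i : ∀ b : ℝ, 0 < b → Integrable (fun ζ => f ζ ^ 2 * Real.exp (-b * f ζ)) μ := by
    intro b hb
    refine Integrable.mono' ((hZ (b / 2) (by positivity)).const_mul (((b / 4)⁻¹) ^ 2))
      (((hfm.pow_const 2).mul (hem b)).aestronglyMeasurable) ?_
    filter_upwards [hf0] with ζ hζ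
    rw [Real.norm_eq_abs, abs_of_nonneg (mul_nonneg (by positivity) (Real.exp_pos _).le)]
    exact aux_sq_mul_exp_le b (f ζ) hb hζ
  -- derivative of the partition function
  have hZd : HasDerivAt (fun b => ∫ ζ, Real.exp (-b * f ζ) ∂μ)
      (∫ ζ, -(f ζ * Real.exp (-β₀ * f ζ)) ∂μ) β₀ := by
    have hball : ∀ b ∈ Metric.ball β₀ (β₀ / 2), β₀ / 2 ≤ b := by
      intro b hb
      rw [Metric.mem_ball, Real.dist_eq, abs_lt] at hb
      linarith [hb.1]
    refine (hasDerivAt_integral_of_dominated_loc_of_deriv_le (Metric.ball_mem_nhds β₀ (by positivity : (0:ℝ) < β₀ / 2))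
      ?_ (hZ β₀ hβ₀) (F' := fun b ζ => -(f ζ * Real.exp (-b * f ζ)))
      ((hfm.mul (hem β₀)).neg.aestronglyMeasurable)
      (bound := fun ζ => (β₀ / 2 / 2)⁻¹ * Real.exp (-(β₀ / 2 / 2) * f ζ)) ?_ ?_ ?_).2
    · filter_upwards [Metric.ball_mem_nhds β₀ (by positivity : (0:ℝ) < β₀ / 2)] with b hb
      exact (hZ b (lt_of_lt_of_le (by positivity) (hball b hb))).aestronglyMeasurable
    · filter_upwards [hf0] with ζ hζ
      intro b hb
      rw [norm_neg, Real.norm_eq_abs, abs_of_nonneg (mul_nonneg hζ (Real.exp_pos _).le)]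
      calc f ζ * Real.exp (-b * f ζ) ≤ f ζ * Real.exp (-(β₀ / 2) * f ζ) := by
            apply mul_le_mul_of_nonneg_left _ hζ
            exact Real.exp_le_exp.2 (by nlinarith [mul_le_mul_of_nonneg_right (hball b hb) hζ])
        _ ≤ (β₀ / 2 / 2)⁻¹ * Real.exp (-(β₀ / 2 / 2) * f ζ) :=
            aux_mul_exp_le (β₀ / 2) (f ζ) (by positivity)
    · exact (hZ (β₀ / 2 / 2) (by positivity)).const_mul _
    · refine Filter.Eventually.of_forall fun ζ => fun b _ => ?_
      have h1 : HasDerivAt (fun b : ℝ => -b * f ζ) (-f ζ) b := by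
        simpa using ((hasDerivAt_id b).neg.mul_const (f ζ))
      exact h1.exp.congr_deriv (by ring)
  -- derivative of the first moment
  have hM1d : HasDerivAt (fun b => ∫ ζ, f ζ * Real.exp (-b * f ζ) ∂μ)
      (∫ ζ, -(f ζ ^ 2 * Real.exp (-β₀ * f ζ)) ∂μ) β₀ := by
    have hball : ∀ b ∈ Metric.ball β₀ (β₀ / 2), β₀ / 2 ≤ b := by
      intro b hb
      rw [Metric.mem_ball, Real.dist_eq, abs_lt] at hb
      linarith [hb.1]
    refine (hasDerivAt_integral_of_dominated_loc_of_deriv_le (Metric.ball_mem_nhds β₀ (by positivity : (0:ℝ) < β₀ / 2))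
      ?_ (hM1i β₀ hβ₀) (F' := fun b ζ => -(f ζ ^ 2 * Real.exp (-b * f ζ)))
      (((hfm.pow_const 2).mul (hem β₀)).neg.aestronglyMeasurable)
      (bound := fun ζ => ((β₀ / 2 / 4)⁻¹) ^ 2 * Real.exp (-(β₀ / 2 / 2) * f ζ)) ?_ ?_ ?_).2
    · filter_upwards [Metric.ball_mem_nhds β₀ (by positivity : (0:ℝ) < β₀ / 2)] with b hb
      exact (hM1i b (lt_of_lt_of_le (by positivity) (hball b hb))).aestronglyMeasurable
    · filter_upwards [hf0] with ζ hζ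
      intro b hb
      rw [norm_neg, Real.norm_eq_abs, abs_of_nonneg (mul_nonneg (by positivity) (Real.exp_pos _).le)]
      calc f ζ ^ 2 * Real.exp (-b * f ζ) ≤ f ζ ^ 2 * Real.exp (-(β₀ / 2) * f ζ) := by
            apply mul_le_mul_of_nonneg_left _ (by positivity)
            exact Real.exp_le_exp.2 (by nlinarith [mul_le_mul_of_nonneg_right (hball b hb) hζ])
        _ ≤ ((β₀ / 2 / 4)⁻¹) ^ 2 * Real.exp (-(β₀ / 2 / 2) * f ζ) :=
            aux_sq_mul_exp_le (β₀ / 2) (f ζ) (by positivity) hζ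
    · exact (hZ (β₀ / 2 / 2) (by positivity)).const_mul _
    · refine Filter.Eventually.of_forall fun ζ => fun b _ => ?_
      have h1 : HasDerivAt (fun b : ℝ => -b * f ζ) (-f ζ) b := by
        simpa using ((hasDerivAt_id b).neg.mul_const (f ζ))
      exact (h1.exp.const_mul (f ζ)).congr_deriv (by ring)

  rw [integral_neg] at hZd hM1d
  set Z : ℝ := ∫ ζ, Real.exp (-β₀ * f ζ) ∂μ with hZdef
  set M1 : ℝ := ∫ ζ, f ζ * Real.exp (-β₀ * f ζ) ∂μ with hM1def
  set M2 : ℝ := ∫ ζ, f ζ ^ 2 * Real.exp (-β₀ * f ζ) ∂μ with hM2def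
  have hZpos : 0 < Z := by
    rw [hZdef]; exact integral_exp_pos (hZ β₀ hβ₀)
  have harg : ∀ s x : ℝ, -x / (kB * s) = -(kB * s)⁻¹ * x := fun s x => by ring
  have hZrw : (∫ ζ', Real.exp (-(ε ζ' - ε0) / (kB * T)) ∂μ) = Z := by
    rw [hZdef]; congr 1; funext ζ
    rw [harg T (ε ζ - ε0), ← hβ₀def]
  have hgibbs : gibbs μ ε ε0 kB T
      = μ.withDensity (fun ζ => ((Z⁻¹ * Real.exp (-β₀ * f ζ)).toNNReal : ℝ≥0∞)) := by
    unfold gibbs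
    congr 1
    funext ζ
    rw [hZrw, harg T (ε ζ - ε0), ← hβ₀def]
    rfl
  have hdnn : ∀ ζ, 0 ≤ Z⁻¹ * Real.exp (-β₀ * f ζ) :=
    fun ζ => mul_nonneg (inv_nonneg.2 hZpos.le) (Real.exp_pos _).le
  have hdm : Measurable fun ζ => (Z⁻¹ * Real.exp (-β₀ * f ζ)).toNNReal :=
    measurable_real_toNNReal.comp (measurable_const.mul (hem β₀))
  have hnu_int : ∀ g : 𝓔 → ℝ, ∫ ζ, g ζ ∂(gibbs μ ε ε0 kB T)
      = ∫ ζ, (Z⁻¹ * Real.exp (-β₀ * f ζ)) * g ζ ∂μ := by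
    intro g
    rw [hgibbs, integral_withDensity_eq_integral_smul hdm g]
    congr 1; funext ζ
    rw [NNReal.smul_def, Real.coe_toNNReal _ (hdnn ζ), smul_eq_mul]
  have hI1 : ∫ ζ, f ζ ∂(gibbs μ ε ε0 kB T) = Z⁻¹ * M1 := by
    rw [hnu_int, show (fun ζ => (Z⁻¹ * Real.exp (-β₀ * f ζ)) * f ζ)
        = fun ζ => Z⁻¹ * (f ζ * Real.exp (-β₀ * f ζ)) from funext fun ζ => by ring,
      integral_const_mul, ← hM1def]
  have hI2 : ∫ ζ, f ζ ^ 2 ∂(gibbs μ ε ε0 kB T) = Z⁻¹ * M2 := by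
    rw [hnu_int, show (fun ζ => (Z⁻¹ * Real.exp (-β₀ * f ζ)) * f ζ ^ 2)
        = fun ζ => Z⁻¹ * (f ζ ^ 2 * Real.exp (-β₀ * f ζ)) from funext fun ζ => by ring,
      integral_const_mul, ← hM2def]
  haveI hprob : IsProbabilityMeasure (gibbs μ ε ε0 kB T) := by
    constructor
    rw [hgibbs, withDensity_apply _ MeasurableSet.univ, Measure.restrict_univ]
    have hcoe : ∀ ζ : 𝓔, ((Z⁻¹ * Real.exp (-β₀ * f ζ)).toNNReal : ℝ≥0∞)
        = ENNReal.ofReal (Z⁻¹ * Real.exp (-β₀ * f ζ)) := fun ζ => rfl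
    rw [lintegral_congr hcoe,
      ← ofReal_integral_eq_lintegral_ofReal ((hZ β₀ hβ₀).const_mul Z⁻¹)
        (Filter.Eventually.of_forall hdnn),
      integral_const_mul, ← hZdef, inv_mul_cancel₀ hZpos.ne', ENNReal.ofReal_one]
  have hX2 : MemLp (fun ζ => f ζ / (kB * T)) 2 (gibbs μ ε ε0 kB T) := by
    refine (memLp_two_iff_integrable_sq ((hfm.div_const _).aestronglyMeasurable)).2 ?_
    rw [hgibbs, integrable_withDensity_iff (hdm.coe_nnreal_ennreal)
      (Filter.Eventually.of_forall fun ζ => ENNReal.coe_lt_top)]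
    have : (fun ζ => (f ζ / (kB * T)) ^ 2 * (((Z⁻¹ * Real.exp (-β₀ * f ζ)).toNNReal : ℝ≥0∞)).toReal)
        = fun ζ => (Z⁻¹ / (kB * T) ^ 2) * (f ζ ^ 2 * Real.exp (-β₀ * f ζ)) := by
      funext ζ
      rw [ENNReal.coe_toReal, Real.coe_toNNReal _ (hdnn ζ)]
      ring
    rw [this]
    exact (hM2i β₀ hβ₀).const_mul _
  have hXint : ∫ ζ, f ζ / (kB * T) ∂(gibbs μ ε ε0 kB T) = (Z⁻¹ * M1) / (kB * T) := by
    rw [integral_div, hI1]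
  have hX2int : ∫ ζ, (f ζ / (kB * T)) ^ 2 ∂(gibbs μ ε ε0 kB T)
      = (Z⁻¹ * M2) / (kB * T) ^ 2 := by
    simp_rw [div_pow]
    rw [integral_div, hI2]
  have hvar : ProbabilityTheory.variance (fun ζ => f ζ / (kB * T)) (gibbs μ ε ε0 kB T)
      = (Z⁻¹ * M2) / (kB * T) ^ 2 - ((Z⁻¹ * M1) / (kB * T)) ^ 2 := by
    rw [ProbabilityTheory.variance_eq_sub hX2]
    simp only [Pi.pow_apply]
    rw [hX2int, hXint]
  refine ⟨?_, ?_, ?_⟩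
  · -- δ(T) = 2 E[ε̄/(k_B T)]
    unfold deltaFun
    have hM1rw : (∫ ζ, (ε ζ - ε0) * Real.exp (-(ε ζ - ε0) / (kB * T)) ∂μ) = M1 := by
      rw [hM1def]; congr 1; funext ζ
      rw [harg T (ε ζ - ε0), ← hβ₀def]
    rw [hZrw, hM1rw, hXint]
    ring
  · -- derivative statement
    have hQ : HasDerivAt
        (fun b => (∫ ζ, f ζ * Real.exp (-b * f ζ) ∂μ) / (∫ ζ, Real.exp (-b * f ζ) ∂μ))
        ((-M2 * Z - M1 * -M1) / Z ^ 2) β₀ := hM1d.div hZd hZpos.ne'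
    have hφ : HasDerivAt (fun s : ℝ => (kB * s)⁻¹) (-kB / (kB * T) ^ 2) T := by
      have h1 : HasDerivAt (fun s : ℝ => kB * s) kB T := by
        simpa using (hasDerivAt_id T).const_mul kB
      exact h1.inv hc.ne'
    have hcomp := (hQ.comp T hφ).const_mul (2 / kB)
    have heq : (fun s => s * deltaFun μ ε ε0 kB s) =ᶠ[nhds T]
        (fun s => (2 / kB) * (((fun b => (∫ ζ, f ζ * Real.exp (-b * f ζ) ∂μ) /
          (∫ ζ, Real.exp (-b * f ζ) ∂μ)) ∘ fun s => (kB * s)⁻¹) s)) := by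
      filter_upwards [eventually_gt_nhds hT] with s hs
      unfold deltaFun
      have e1 : (∫ ζ, (ε ζ - ε0) * Real.exp (-(ε ζ - ε0) / (kB * s)) ∂μ)
          = ∫ ζ, f ζ * Real.exp (-(kB * s)⁻¹ * f ζ) ∂μ := by
        congr 1; funext ζ; rw [harg s (ε ζ - ε0)]
      have e2 : (∫ ζ, Real.exp (-(ε ζ - ε0) / (kB * s)) ∂μ)
          = ∫ ζ, Real.exp (-(kB * s)⁻¹ * f ζ) ∂μ := by
        congr 1; funext ζ; rw [harg s (ε ζ - ε0)]
      rw [e1, e2]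
      show s * (2 / (kB * s) * _) = 2 / kB * _
      rw [← mul_assoc, show s * (2 / (kB * s)) = 2 / kB from by field_simp]
      rfl
    have hder := hcomp.congr_of_eventuallyEq heq
    have hval : (2 / kB) * (((-M2 * Z - M1 * -M1) / Z ^ 2) * (-kB / (kB * T) ^ 2))
        = 2 * ProbabilityTheory.variance (fun ζ => f ζ / (kB * T)) (gibbs μ ε ε0 kB T) := by
      rw [hvar]
      field_simp
      ring
    rw [← hval]
    exact hder
  · -- variance identity
    rw [hvar, hI1, hI2]
    field_simp


end
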